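/- For an odd prime p and an integer a not divisible by p, the sign of the permutation of Z/pZ induced by multiplication by a equals the Legendre symbol (a/p). -/
import Mathlib


/-- For an odd prime `p` and an integer `a` not divisible by `p`, the sign of the
permutation of `ℤ/pℤ` induced by multiplication by `a` equals the Legendre symbol `(a/p)`. -/
theorem zolotarev (p : ℕ) [Fact p.Prime] (hp : p ≠ 2) (a : ℤ) (ha : ¬ (p : ℤ) ∣ a) :
    ∃ σ : Equiv.Perm (ZMod p), (∀ x : ZMod p, σ x = (a : ZMod p) * x) ∧
      (Equiv.Perm.sign σ : ℤ) = legendreSym p a := by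
  have hp3 : 3 ≤ p := (Fact.out : p.Prime).two_le.lt_of_ne (Ne.symm hp)
  have h0 : (a : ZMod p) ≠ 0 := by
    rwa [Ne, ZMod.intCast_zmod_eq_zero_iff_dvd]
  set u : (ZMod p)ˣ := Units.mk0 _ h0 with hu
  obtain ⟨g, hg⟩ := IsCyclic.exists_generator (α := (ZMod p)ˣ)
  obtain ⟨k, hk⟩ : ∃ k : ℕ, g ^ k = u :=
    Submonoid.mem_powers_iff u g |>.mp (mem_powers_iff_mem_zpowers.mpr (hg u))
  have hcard : Fintype.card (ZMod p)ˣ = p - 1 := by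
    rw [ZMod.card_units_eq_totient, Nat.totient_prime Fact.out]
  have hord : orderOf g = p - 1 := by
    rw [orderOf_eq_card_of_forall_mem_zpowers hg, Nat.card_eq_fintype_card, hcard]
  -- the permutation homomorphism
  set φ : (ZMod p)ˣ →* Equiv.Perm (ZMod p) := MulAction.toPermHom (ZMod p)ˣ (ZMod p) with hφ
  have happ : ∀ (v : (ZMod p)ˣ) (x : ZMod p), φ v x = (v : ZMod p) * x := fun v x => rfl
  refine ⟨φ u, fun x => rfl, ?_⟩
  -- the generator is not 1
  have hg1 : (g : ZMod p) ≠ 1 := by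
    intro h
    have : g = 1 := Units.ext h
    rw [this, orderOf_one] at hord
    omega
  -- mul by g fixes only 0
  have hfix : ∀ x : ZMod p, (g : ZMod p) * x = x ↔ x = 0 := by
    intro x
    constructor
    · intro h
      by_contra hx
      have := mul_right_cancel₀ hx (h.trans (one_mul x).symm)
      exact hg1 this
    · rintro rfl; rw [mul_zero]
  -- φ g is a cycle
  have hcyc : (φ g).IsCycle := by
    refine ⟨1, ?_, ?_⟩
    · rw [happ, mul_one]; exact hg1
    · intro y hy
      have hy0 : y ≠ 0 := by
        intro h; apply hy; rw [h, happ, mul_zero]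
      obtain ⟨n, hn⟩ := hg (Units.mk0 y hy0)
      refine ⟨n, ?_⟩
      have hn' : g ^ n = Units.mk0 y hy0 := hn
      have : (φ g) ^ n = φ (g ^ n) := (map_zpow φ g n).symm
      rw [this, happ, mul_one, hn']
      rfl
  -- support of φ g
  have hsupp : (φ g).support = {(0 : ZMod p)}ᶜ := by
    ext x
    simp only [Equiv.Perm.mem_support, Finset.mem_compl, Finset.mem_singleton, happ]
    exact not_congr (hfix x)
  have hsc : (φ g).support.card = p - 1 := by
    rw [hsupp, Finset.card_compl, Finset.card_singleton, ZMod.card]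
  -- sign of φ g
  have hodd : Odd (p - 1 - 1) := by
    have := (Fact.out : p.Prime).odd_of_ne_two hp
    obtain ⟨m, hm⟩ := this
    refine ⟨m - 1, by omega⟩
  have hsg : Equiv.Perm.sign (φ g) = -1 := by
    rw [hcyc.sign, hsc]
    have hev : Even (p - 1) := by
      obtain ⟨m, hm⟩ := (Fact.out : p.Prime).odd_of_ne_two hp
      exact ⟨m, by omega⟩
    rw [hev.neg_one_pow]
  -- legendre of g
  have hgsq : ¬ IsSquare ((g : (ZMod p)ˣ) : ZMod p) := by
    rintro ⟨b, hb⟩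
    have hb0 : b ≠ 0 := by
      rintro rfl
      rw [mul_zero] at hb
      exact g.ne_zero hb
    have : g = (Units.mk0 b hb0) ^ 2 := by
      ext; rw [hb]; simp [sq]
    have h2 : 2 * ((p - 1) / 2) = p - 1 := by
      obtain ⟨m, hm⟩ := (Fact.out : p.Prime).odd_of_ne_two hp
      omega
    have h1 : g ^ ((p-1)/2) = 1 := by
      rw [this, ← pow_mul, h2, ← hcard, pow_card_eq_one]
    have := orderOf_dvd_of_pow_eq_one h1
    rw [hord] at this
    have := Nat.le_of_dvd (by omega) this
    omega
  have hχg : quadraticChar (ZMod p) ((g : (ZMod p)ˣ) : ZMod p) = -1 :=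
    quadraticChar_neg_one_iff_not_isSquare.mpr hgsq
  -- conclude
  have hL : legendreSym p a = (-1 : ℤ) ^ k := by
    show quadraticChar (ZMod p) (a : ZMod p) = (-1 : ℤ) ^ k
    have : (a : ZMod p) = ((g : (ZMod p)ˣ) : ZMod p) ^ k := by
      rw [← Units.val_pow_eq_pow_val, hk]; rfl
    rw [this, map_pow, hχg]
  have hS : Equiv.Perm.sign (φ u) = (-1 : ℤˣ) ^ k := by
    rw [← hk, map_pow, map_pow, hsg]
  rw [hS, hL]
  push_cast
  ring
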